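/- Let α > 0 and define on the triangle {(t,s): -t ≤ s ≤ t, 0 ≤ t ≤ T} the function G(t,s) = (sin(αs) csc(αT) sin(α(t−T)) − cosh(αs) csch(αT) cosh(α(t−T)))/(2α), where αT ∉ πℤ. If c̄ is the smallest positive root of tan(c)tanh(c)=1 and αT = 2c̄, then G(T/2, −T/2) = 0 and ∂G/∂t(T/2, −T/2) = 0. -/

import Mathlib

/-- Explicit expression of the Green's function `G_m` with `m = -α² < 0` on
the triangle `{(t,s) : -t ≤ s ≤ t}`. -/
noncomputable def gneg (α T t s : ℝ) : ℝ :=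
  (Real.sin (α * s) * (1 / Real.sin (α * T)) * Real.sin (α * (t - T)) -
    Real.cosh (α * s) * (1 / Real.sinh (α * T)) * Real.cosh (α * (t - T))) /
    (2 * α)

theorem stmt11 (α T c : ℝ) (hα : 0 < α) (hT : 0 < T)
    (hres : ∀ k : ℤ, α * T ≠ k * Real.pi)
    (hc : 0 < c) (hroot : Real.tan c * Real.tanh c = 1)
    (hmin : ∀ x : ℝ, 0 < x → Real.tan x * Real.tanh x = 1 → c ≤ x)
    (hαT : α * T = 2 * c) :
    gneg α T (T / 2) (-(T / 2)) = 0 ∧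
    deriv (fun τ => gneg α T τ (-(T / 2))) (T / 2) = 0 := by
  have h2c : Real.sin (2 * c) ≠ 0 := by
    intro h
    rw [Real.sin_eq_zero_iff] at h
    obtain ⟨n, hn⟩ := h
    exact hres n (by rw [hαT, ← hn])
  have hcosc : Real.cos c ≠ 0 := by
    intro h
    rw [Real.tan_eq_sin_div_cos, h, div_zero, zero_mul] at hroot
    exact one_ne_zero hroot.symm
  have hsinc : Real.sin c ≠ 0 := by
    intro h
    apply h2c
    rw [Real.sin_two_mul, h]; ring
  have hsinhc : Real.sinh c ≠ 0 := ne_of_gt (Real.sinh_pos_iff.mpr hc)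
  have hcoshc : Real.cosh c ≠ 0 := ne_of_gt (Real.cosh_pos c)
  have h2sinh : Real.sinh (2 * c) ≠ 0 := ne_of_gt (Real.sinh_pos_iff.mpr (by linarith))
  have hkey : Real.sin c * Real.sinh c = Real.cos c * Real.cosh c := by
    rw [Real.tan_eq_sin_div_cos, Real.tanh_eq_sinh_div_cosh] at hroot
    field_simp at hroot
    linarith
  have hs : α * -(T / 2) = -c := by nlinarith [hαT]
  have ht : α * (T / 2 - T) = -c := by nlinarith [hαT]
  constructor
  · unfold gneg
    rw [hs, ht, hαT, Real.sin_neg, Real.cosh_neg, Real.sin_two_mul, Real.sinh_two_mul]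
    have : -Real.sin c * (1 / (2 * Real.sin c * Real.cos c)) * -Real.sin c -
        Real.cosh c * (1 / (2 * Real.sinh c * Real.cosh c)) * Real.cosh c = 0 := by
      field_simp
      linear_combination hkey
    rw [this, zero_div]
  · have hα2 : (2 : ℝ) * α ≠ 0 := by positivity
    set t0 : ℝ := T / 2
    have hlin : HasDerivAt (fun τ : ℝ => α * (τ - T)) α t0 := by
      simpa using (((hasDerivAt_id t0).sub_const T).const_mul α)
    have h1 : HasDerivAt (fun τ : ℝ => Real.sin (α * (τ - T)))
        (Real.cos (α * (t0 - T)) * α) t0 :=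
      ((Real.hasDerivAt_sin (α * (t0 - T))).comp t0 hlin :)
    have h2 : HasDerivAt (fun τ : ℝ => Real.cosh (α * (τ - T)))
        (Real.sinh (α * (t0 - T)) * α) t0 :=
      ((Real.hasDerivAt_cosh (α * (t0 - T))).comp t0 hlin :)
    have hG : HasDerivAt (fun τ => gneg α T τ (-(T / 2)))
        ((Real.sin (α * -(T / 2)) * (1 / Real.sin (α * T)) * (Real.cos (α * (t0 - T)) * α) -
          Real.cosh (α * -(T / 2)) * (1 / Real.sinh (α * T)) * (Real.sinh (α * (t0 - T)) * α)) /
          (2 * α)) t0 := by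
      unfold gneg
      exact ((h1.const_mul _).sub (h2.const_mul _)).div_const (2 * α)
    rw [hG.deriv, hs, ht, hαT, Real.sin_neg, Real.cosh_neg, Real.cos_neg, Real.sinh_neg,
      Real.sin_two_mul, Real.sinh_two_mul]
    rw [div_eq_zero_iff]
    left
    field_simp
    ring_nf
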